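/- Let T and S be real 3×3 matrices, and let T₁ be the largest singular value of T. If (2/3) · Σ_{i,j=1}^3 T_{ij} S_{ij} > T₁, then the correlation function E_S(m,n) = m · (S n) admits no LHS (non-steering) model. -/

import Mathlib

open MeasureTheory

noncomputable section

/-- `ℝ³` with the Euclidean norm. -/
abbrev V3 : Type := EuclideanSpace ℝ (Fin 3)

/-- The unit sphere `S² ⊂ ℝ³` (as a subtype). -/
abbrev Sph : Type := Metric.sphere (0 : V3) 1

/-- The rotation-invariant surface measure `dΩ` on the unit sphere `S² ⊂ ℝ³`,
with total measure `4π`. -/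
def dOmega : Measure Sph := (volume : Measure V3).toSphere

/-- Euclidean dot product on `ℝ³`. -/
def dot (x y : V3) : ℝ := ∑ i, x i * y i

/-- The bilinear form `m · T n = ∑ᵢⱼ Tᵢⱼ mᵢ nⱼ` associated to a real `3×3` matrix `T`. -/
def bilin (T : Matrix (Fin 3) (Fin 3) ℝ) (m n : V3) : ℝ := ∑ i, ∑ j, T i j * m i * n j

/-- A local-hidden-state (LHS, non-steering) model for a correlation function `E` on `S²×S²`:
a finite index set, probabilities `p λ ≥ 0` summing to `1`, measurable response functions
`I(·,λ) : S² → [-1,1]`, and unit (Bloch) vectors `λ⃗_λ ∈ ℝ³` reproducing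
`E(m,n) = ∑_λ p_λ I(m,λ) (n · λ⃗_λ)` for all unit vectors `m, n`. -/
def HasLHSModel (E : V3 → V3 → ℝ) : Prop :=
  ∃ (N : ℕ) (p : Fin N → ℝ) (I : Fin N → Sph → ℝ) (lam : Fin N → V3),
    (∀ l, 0 ≤ p l) ∧ (∑ l, p l) = 1 ∧
    (∀ l, Measurable (I l)) ∧
    (∀ l m, |I l m| ≤ 1) ∧
    (∀ l, ‖lam l‖ = 1) ∧
    (∀ m n : Sph, E m n = ∑ l, p l * I l m * dot n (lam l))

/-- The largest singular value of `T`, i.e. the supremum of `m · T n` over unit vectors. -/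
def maxSingularValue (T : Matrix (Fin 3) (Fin 3) ℝ) : ℝ :=
  sSup {x : ℝ | ∃ m n : V3, ‖m‖ = 1 ∧ ‖n‖ = 1 ∧ x = bilin T m n}

open Real Set Metric


instance : IsFiniteMeasure dOmega := by unfold dOmega; infer_instance

/-- Polar coordinates on `ℝ³`. -/
lemma integral_polar (f : V3 → ℝ) :
    ∫ x, f x = ∫ p : Sph × Ioi (0:ℝ), f ((p.2 : ℝ) • (p.1 : V3))
      ∂(dOmega.prod (Measure.volumeIoiPow 2)) := by
  unfold dOmega
  have h2 := (volume : Measure V3).measurePreserving_homeomorphUnitSphereProd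
  have e3 : Module.finrank ℝ V3 - 1 = 2 := by
    simp [finrank_euclideanSpace_fin]
  rw [e3] at h2
  have h3 := h2.integral_comp (Homeomorph.measurableEmbedding _)
    (fun p : Sph × Ioi (0:ℝ) => f ((p.2 : ℝ) • (p.1 : V3)))
  rw [← h3]
  have h4 : ∀ x : ({(0:V3)}ᶜ : Set V3),
      f (((homeomorphUnitSphereProd V3) x).2.1 • (((homeomorphUnitSphereProd V3) x).1 : V3))
        = f x := by
    intro x
    have hx : (x : V3) ≠ 0 := x.2
    simp [homeomorphUnitSphereProd_apply_snd_coe, homeomorphUnitSphereProd_apply_fst_coe,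
      smul_inv_smul₀ (norm_ne_zero_iff.2 hx)]
  simp only [h4]
  rw [integral_subtype_comap (measurableSet_singleton (0:V3)).compl f,
    MeasureTheory.restrict_compl_singleton]

/-- Integration against the radial measure with density `r²`. -/
lemma integral_volumeIoiPow (ρ : ℝ → ℝ) :
    ∫ r : Ioi (0:ℝ), ρ r ∂(Measure.volumeIoiPow 2) = ∫ r in Ioi (0:ℝ), r ^ 2 * ρ r := by
  simp only [Measure.volumeIoiPow, ENNReal.ofReal]
  rw [integral_withDensity_eq_integral_smul
      ((measurable_subtype_coe.pow_const _).real_toNNReal) (fun r : Ioi (0:ℝ) => ρ r),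
    integral_subtype_comap measurableSet_Ioi fun a : ℝ => (a ^ 2).toNNReal • ρ a]
  refine setIntegral_congr_fun measurableSet_Ioi fun x hx => ?_
  rw [NNReal.smul_def, Real.coe_toNNReal _ (pow_nonneg hx.out.le _), smul_eq_mul]

/-- `∫_0^∞ r^k e^{-r²} dr` via the Gamma function. -/
lemma integral_pow_exp_neg_sq (k : ℕ) :
    ∫ r in Ioi (0:ℝ), r ^ k * exp (-r ^ 2) = (1 / 2) * Real.Gamma ((k + 1) / 2) := by
  rw [← integral_rpow_mul_exp_neg_rpow (by norm_num : (0:ℝ) < 2)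
      (by exact_mod_cast neg_one_lt_zero.trans_le (Nat.cast_nonneg k) : (-1:ℝ) < (k:ℝ))]
  refine setIntegral_congr_fun measurableSet_Ioi fun x hx => ?_
  rw [show ((2:ℝ)) = ((2:ℕ):ℝ) by norm_num, Real.rpow_natCast, Real.rpow_natCast]

lemma gamma_val_1 : ∫ r in Ioi (0:ℝ), r ^ 1 * exp (-r ^ 2) = 1 / 2 := by
  rw [integral_pow_exp_neg_sq]
  norm_num [Real.Gamma_one]

lemma gamma_val_2 : ∫ r in Ioi (0:ℝ), r ^ 2 * exp (-r ^ 2) = Real.sqrt π / 4 := by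
  rw [integral_pow_exp_neg_sq]
  have : ((2:ℕ) + 1 : ℝ) / 2 = 1 / 2 + 1 := by norm_num
  rw [this, Real.Gamma_add_one (by norm_num), Real.Gamma_one_half_eq]
  ring

lemma gamma_val_3 : ∫ r in Ioi (0:ℝ), r ^ 3 * exp (-r ^ 2) = 1 / 2 := by
  rw [integral_pow_exp_neg_sq]
  have : ((3:ℕ) + 1 : ℝ) / 2 = 2 := by norm_num
  rw [this, Real.Gamma_two]
  norm_num

lemma gamma_val_4 : ∫ r in Ioi (0:ℝ), r ^ 4 * exp (-r ^ 2) = 3 / 8 * Real.sqrt π := by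
  rw [integral_pow_exp_neg_sq]
  have : ((4:ℕ) + 1 : ℝ) / 2 = 3 / 2 + 1 := by norm_num
  rw [this, Real.Gamma_add_one (by norm_num),
    show (3/2 : ℝ) = 1/2 + 1 by norm_num, Real.Gamma_add_one (by norm_num),
    Real.Gamma_one_half_eq]
  ring

lemma gauss0 : ∫ x : ℝ, exp (-x ^ 2) = Real.sqrt π := by
  have := integral_gaussian 1
  simpa using this

lemma gauss1 : ∫ x : ℝ, x * exp (-x ^ 2) = 0 := by
  have hmp : MeasurePreserving (fun x : ℝ => -x) volume volume :=
    ⟨measurable_neg, Measure.map_neg_eq_self _⟩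
  have hme : MeasurableEmbedding (fun x : ℝ => -x) :=
    (Homeomorph.neg ℝ).isClosedEmbedding.measurableEmbedding
  have h := hmp.integral_comp hme (fun x : ℝ => x * exp (-x ^ 2))
  have h2 : ∫ x : ℝ, -x * exp (-(-x) ^ 2) = ∫ x : ℝ, x * exp (-x ^ 2) := h
  have h3 : ∫ x : ℝ, -x * exp (-(-x) ^ 2) = -∫ x : ℝ, x * exp (-x ^ 2) := by
    rw [← integral_neg]
    congr 1; funext x; ring_nf
  linarith [h2.symm.trans h3]

lemma gaussAbs : ∫ x : ℝ, |x| * exp (-x ^ 2) = 1 := by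
  have h := integral_comp_abs (f := fun t : ℝ => t * exp (-t ^ 2))
  have h1 : ∫ x : ℝ, |x| * exp (-|x| ^ 2) = ∫ x : ℝ, |x| * exp (-x ^ 2) := by
    congr 1; funext x; rw [sq_abs]
  have g1 := gamma_val_1
  simp only [pow_one] at g1
  rw [← h1, h, g1]; norm_num

lemma gauss2 : ∫ x : ℝ, x ^ 2 * exp (-x ^ 2) = Real.sqrt π / 2 := by
  have h := integral_comp_abs (f := fun t : ℝ => t ^ 2 * exp (-t ^ 2))
  have h1 : ∫ x : ℝ, |x| ^ 2 * exp (-|x| ^ 2) = ∫ x : ℝ, x ^ 2 * exp (-x ^ 2) := by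
    congr 1; funext x; rw [sq_abs]
  rw [← h1, h, gamma_val_2]; ring

/-- Reduction of an integral over `ℝ³` to the product measure on `Fin 3 → ℝ`. -/
lemma integral_V3_pi (f : V3 → ℝ) :
    ∫ x : V3, f x = ∫ y : Fin 3 → ℝ, f ((MeasurableEquiv.toLp 2 (Fin 3 → ℝ)) y) :=
  ((MeasurePreserving.symm (MeasurableEquiv.toLp 2 (Fin 3 → ℝ)).symm
      (EuclideanSpace.volume_preserving_symm_measurableEquiv_toLp (Fin 3))).integral_comp
    (MeasurableEquiv.measurableEmbedding _) f).symm

lemma coord_symm (y : Fin 3 → ℝ) (i : Fin 3) :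
    ((MeasurableEquiv.toLp 2 (Fin 3 → ℝ)) y : V3) i = y i := rfl

lemma norm_symm_sq (y : Fin 3 → ℝ) :
    ‖((MeasurableEquiv.toLp 2 (Fin 3 → ℝ)) y : V3)‖ ^ 2 = ∑ i, y i ^ 2 := by
  rw [EuclideanSpace.norm_eq]
  rw [Real.sq_sqrt (by positivity)]
  simp [coord_symm]

lemma gauss3_moment (i j : Fin 3) :
    ∫ x : V3, x i * x j * exp (-‖x‖ ^ 2)
      = if i = j then π * Real.sqrt π / 2 else 0 := by
  classical
  set f : Fin 3 → ℝ → ℝ :=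
    fun k t => (if k = i then t else 1) * ((if k = j then t else 1) * exp (-t ^ 2)) with hf
  rw [integral_V3_pi]
  have key : (fun y : Fin 3 → ℝ =>
      ((MeasurableEquiv.toLp 2 (Fin 3 → ℝ)) y : V3) i *
      ((MeasurableEquiv.toLp 2 (Fin 3 → ℝ)) y : V3) j *
      exp (-‖((MeasurableEquiv.toLp 2 (Fin 3 → ℝ)) y : V3)‖ ^ 2))
      = fun y => ∏ k, f k (y k) := by
    funext y
    rw [norm_symm_sq, coord_symm, coord_symm, hf]
    simp only [Finset.prod_mul_distrib]
    rw [Finset.prod_ite_eq' Finset.univ i (fun k => y k),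
      Finset.prod_ite_eq' Finset.univ j (fun k => y k), ← Real.exp_sum]
    simp only [Finset.mem_univ, if_true, Finset.sum_neg_distrib]
    ring
  rw [key, MeasureTheory.integral_fintype_prod_volume_eq_prod f]
  have hint : ∀ k, (∫ t : ℝ, f k t)
      = if k = i then (if k = j then Real.sqrt π / 2 else 0)
        else (if k = j then 0 else Real.sqrt π) := by
    intro k
    by_cases h1 : k = i
    · by_cases h2 : k = j
      · rw [if_pos h1, if_pos h2]
        have hfe : (fun t : ℝ => f k t) = fun t : ℝ => t ^ 2 * exp (-t ^ 2) := by
          funext t; rw [hf]; simp only; rw [if_pos h1, if_pos h2]; ring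
        rw [hfe]; exact gauss2
      · rw [if_pos h1, if_neg h2]
        have hfe : (fun t : ℝ => f k t) = fun t : ℝ => t * exp (-t ^ 2) := by
          funext t; rw [hf]; simp only; rw [if_pos h1, if_neg h2]; ring
        rw [hfe]; exact gauss1
    · by_cases h2 : k = j
      · rw [if_neg h1, if_pos h2]
        have hfe : (fun t : ℝ => f k t) = fun t : ℝ => t * exp (-t ^ 2) := by
          funext t; rw [hf]; simp only; rw [if_neg h1, if_pos h2]; ring
        rw [hfe]; exact gauss1
      · rw [if_neg h1, if_neg h2]
        have hfe : (fun t : ℝ => f k t) = fun t : ℝ => exp (-t ^ 2) := by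
          funext t; rw [hf]; simp only; rw [if_neg h1, if_neg h2]; ring
        rw [hfe]; exact gauss0
  by_cases hij : i = j
  · subst hij
    rw [if_pos rfl]
    have h1 : ∀ k : Fin 3, (∫ t : ℝ, f k t) = if k = i then Real.sqrt π / 2 else Real.sqrt π := by
      intro k; rw [hint k]; by_cases hk : k = i <;> simp [hk]
    calc ∏ k, (∫ t : ℝ, f k t) = ∏ k, (if k = i then Real.sqrt π / 2 else Real.sqrt π) :=
          Finset.prod_congr rfl fun k _ => h1 k
      _ = (Real.sqrt π / 2) * ∏ k ∈ Finset.univ.erase i,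
            (if k = i then Real.sqrt π / 2 else Real.sqrt π) := by
          rw [← Finset.mul_prod_erase Finset.univ _ (Finset.mem_univ i), if_pos rfl]
      _ = (Real.sqrt π / 2) * ∏ _k ∈ Finset.univ.erase i, Real.sqrt π := by
          rw [Finset.prod_congr rfl fun k hk => if_neg (Finset.ne_of_mem_erase hk)]
      _ = π * Real.sqrt π / 2 := by
          rw [Finset.prod_const, Finset.card_erase_of_mem (Finset.mem_univ i)]
          simp only [Finset.card_univ, Fintype.card_fin]
          rw [show (3 - 1 : ℕ) = 2 from rfl, Real.sq_sqrt pi_pos.le]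
          ring
  · rw [if_neg hij]
    refine Finset.prod_eq_zero (Finset.mem_univ i) ?_
    rw [hint i, if_pos rfl, if_neg fun h => hij h]

lemma sphere_moment (i j : Fin 3) :
    ∫ n : Sph, ((n : V3) i * (n : V3) j) ∂dOmega = if i = j then 4 * π / 3 else 0 := by
  have key := integral_polar (fun x : V3 => x i * x j * exp (-‖x‖ ^ 2))
  have hsplit : (fun p : Sph × Ioi (0:ℝ) =>
      ((p.2 : ℝ) • (p.1 : V3)) i * ((p.2 : ℝ) • (p.1 : V3)) j *
        exp (-‖(p.2 : ℝ) • (p.1 : V3)‖ ^ 2))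
      = fun p => ((p.1 : V3) i * (p.1 : V3) j) * ((p.2:ℝ) ^ 2 * exp (-(p.2:ℝ) ^ 2)) := by
    funext p
    have hr : (0:ℝ) < (p.2 : ℝ) := p.2.2
    have hn : ‖(p.1 : V3)‖ = 1 := mem_sphere_zero_iff_norm.mp p.1.2
    have hsm : ∀ k, ((p.2 : ℝ) • (p.1 : V3)) k = (p.2:ℝ) * (p.1 : V3) k := fun k => rfl
    rw [norm_smul, hn, mul_one, Real.norm_eq_abs, abs_of_pos hr, hsm, hsm]
    ring
  rw [hsplit] at key
  rw [integral_prod_mul (fun n : Sph => (n:V3) i * (n:V3) j)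
      (fun r : Ioi (0:ℝ) => (r:ℝ)^2 * exp (-(r:ℝ)^2)),
    integral_volumeIoiPow (fun t : ℝ => t ^ 2 * exp (-t ^ 2))] at key
  have hrad : ∫ r in Ioi (0:ℝ), r ^ 2 * (r ^ 2 * exp (-r ^ 2)) = 3 / 8 * Real.sqrt π := by
    rw [show (fun r : ℝ => r ^ 2 * (r ^ 2 * exp (-r ^ 2)))
        = fun r : ℝ => r ^ 4 * exp (-r ^ 2) by funext r; ring]
    exact gamma_val_4
  rw [hrad, gauss3_moment i j] at key
  have hs : (0:ℝ) < 3 / 8 * Real.sqrt π := by positivity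
  by_cases hij : i = j
  · rw [if_pos hij] at key ⊢
    have h2 : (4 * π / 3) * (3 / 8 * Real.sqrt π) = π * Real.sqrt π / 2 := by ring
    exact mul_right_cancel₀ (ne_of_gt hs) (key.symm.trans h2.symm)
  · rw [if_neg hij] at key ⊢
    rcases mul_eq_zero.mp key.symm with h | h
    · exact h
    · exact absurd h (ne_of_gt hs)

lemma gauss3_abs : ∫ y : V3, |y 0| * exp (-‖y‖ ^ 2) = π := by
  classical
  set f : Fin 3 → ℝ → ℝ :=
    fun k t => (if k = 0 then |t| else 1) * exp (-t ^ 2) with hf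
  rw [integral_V3_pi]
  have key : (fun y : Fin 3 → ℝ =>
      |((MeasurableEquiv.toLp 2 (Fin 3 → ℝ)) y : V3) 0| *
      exp (-‖((MeasurableEquiv.toLp 2 (Fin 3 → ℝ)) y : V3)‖ ^ 2))
      = fun y => ∏ k, f k (y k) := by
    funext y
    rw [norm_symm_sq, coord_symm, hf]
    simp only [Finset.prod_mul_distrib]
    rw [Finset.prod_ite_eq' Finset.univ (0 : Fin 3) (fun k => |y k|), ← Real.exp_sum]
    simp only [Finset.mem_univ, if_true, Finset.sum_neg_distrib]
  rw [key, MeasureTheory.integral_fintype_prod_volume_eq_prod f]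
  have hint : ∀ k, (∫ t : ℝ, f k t) = if k = 0 then 1 else Real.sqrt π := by
    intro k
    by_cases h1 : k = 0
    · rw [if_pos h1]
      have hfe : (fun t : ℝ => f k t) = fun t : ℝ => |t| * exp (-t ^ 2) := by
        funext t; rw [hf]; simp only; rw [if_pos h1]
      rw [hfe]; exact gaussAbs
    · rw [if_neg h1]
      have hfe : (fun t : ℝ => f k t) = fun t : ℝ => exp (-t ^ 2) := by
        funext t; rw [hf]; simp only; rw [if_neg h1]; ring
      rw [hfe]; exact gauss0
  calc ∏ k, (∫ t : ℝ, f k t) = ∏ k, (if k = (0:Fin 3) then (1:ℝ) else Real.sqrt π) :=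
        Finset.prod_congr rfl fun k _ => hint k
    _ = π := by
        rw [Fin.prod_univ_three, if_pos rfl, if_neg (by decide : (1:Fin 3) ≠ 0),
          if_neg (by decide : (2:Fin 3) ≠ 0), one_mul, Real.mul_self_sqrt pi_pos.le]

lemma dot_smul_left (r : ℝ) (x y : V3) : dot (r • x) y = r * dot x y := by
  simp only [dot, Finset.mul_sum, PiLp.smul_apply, smul_eq_mul]
  exact Finset.sum_congr rfl fun k _ => by ring

lemma dot_eq_inner (x y : V3) : dot x y = (inner ℝ x y : ℝ) := by
  simp [dot, PiLp.inner_apply, RCLike.inner_apply, conj_trivial]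
  exact Finset.sum_congr rfl fun i _ => mul_comm _ _

lemma sphere_abs (a : V3) : ∫ n : Sph, |dot (n : V3) a| ∂dOmega = 2 * π * ‖a‖ := by
  rcases eq_or_ne a 0 with rfl | ha
  · simp [dot]
  have hna : ‖a‖ ≠ 0 := norm_ne_zero_iff.2 ha
  set u : V3 := ‖a‖⁻¹ • a with hu_def
  have hu : ‖u‖ = 1 := by
    rw [hu_def, norm_smul, norm_inv, norm_norm, inv_mul_cancel₀ hna]
  have horth : Orthonormal ℝ (Set.restrict {(0 : Fin 3)} (fun _ : Fin 3 => u)) := by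
    constructor
    · intro i; exact hu
    · intro i j hij
      exact absurd (Subsingleton.elim i j) hij
  obtain ⟨b, hb⟩ := horth.exists_orthonormalBasis_extension_of_card_eq
    (by simp [finrank_euclideanSpace]) 
  have hb0 : b 0 = u := hb 0 rfl
  have hdot : ∀ x : V3, dot x a = ‖a‖ * (b.repr x 0) := by
    intro x
    have h1 : a = ‖a‖ • u := by rw [hu_def, smul_inv_smul₀ hna]
    calc dot x a = (inner ℝ x (‖a‖ • u) : ℝ) := by rw [dot_eq_inner, ← h1]
      _ = ‖a‖ * (inner ℝ x u : ℝ) := real_inner_smul_right x u ‖a‖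
      _ = ‖a‖ * (b.repr x 0) := by
          rw [← b.repr.inner_map_map x u, ← hb0, OrthonormalBasis.repr_self]
          simp [EuclideanSpace.inner_single_right]
  -- polar decomposition of the Gaussian integral
  have key := integral_polar (fun x : V3 => |dot x a| * exp (-‖x‖ ^ 2))
  have hsplit : (fun p : Sph × Ioi (0:ℝ) =>
      |dot ((p.2 : ℝ) • (p.1 : V3)) a| * exp (-‖(p.2 : ℝ) • (p.1 : V3)‖ ^ 2))
      = fun p => |dot (p.1 : V3) a| * ((p.2:ℝ) * exp (-(p.2:ℝ) ^ 2)) := by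
    funext p
    have hr : (0:ℝ) < (p.2 : ℝ) := p.2.2
    have hn : ‖(p.1 : V3)‖ = 1 := mem_sphere_zero_iff_norm.mp p.1.2
    rw [norm_smul, hn, mul_one, Real.norm_eq_abs, abs_of_pos hr, dot_smul_left,
      abs_mul, abs_of_pos hr]
    ring
  rw [hsplit] at key
  rw [integral_prod_mul (fun n : Sph => |dot (n:V3) a|)
      (fun r : Ioi (0:ℝ) => (r:ℝ) * exp (-(r:ℝ)^2)),
    integral_volumeIoiPow (fun t : ℝ => t * exp (-t ^ 2))] at key
  have hrad : ∫ r in Ioi (0:ℝ), r ^ 2 * (r * exp (-r ^ 2)) = 1 / 2 := by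
    rw [show (fun r : ℝ => r ^ 2 * (r * exp (-r ^ 2)))
        = fun r : ℝ => r ^ 3 * exp (-r ^ 2) by funext r; ring]
    exact gamma_val_3
  rw [hrad] at key
  -- compute the space integral by rotating `a` to the first axis
  have hme : MeasurableEmbedding (⇑b.repr) := b.repr.toHomeomorph.measurableEmbedding
  have hcomp := b.measurePreserving_repr.integral_comp hme
    (fun y : EuclideanSpace ℝ (Fin 3) => ‖a‖ * (|y 0| * exp (-‖y‖ ^ 2)))
  have heq : (fun x : V3 => ‖a‖ * (|b.repr x 0| * exp (-‖b.repr x‖ ^ 2)))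
      = fun x : V3 => |dot x a| * exp (-‖x‖ ^ 2) := by
    funext x
    rw [hdot x, abs_mul, abs_of_nonneg (norm_nonneg a), b.repr.norm_map]
    ring
  rw [heq] at hcomp
  rw [hcomp, integral_const_mul, gauss3_abs] at key
  -- key : ‖a‖ * π = (∫ n, |dot n a|) * (1/2)
  have h2 : (2 * π * ‖a‖) * (1 / 2) = ‖a‖ * π := by ring
  exact mul_right_cancel₀ (by norm_num : (1:ℝ)/2 ≠ 0) (key.symm.trans h2.symm)

lemma coord_abs_le (x : V3) (i : Fin 3) : |x i| ≤ ‖x‖ := by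
  rw [EuclideanSpace.norm_eq, ← Real.sqrt_sq_eq_abs]
  simp only [Real.norm_eq_abs, sq_abs]
  exact Real.sqrt_le_sqrt (Finset.single_le_sum (fun k _ => sq_nonneg (x k)) (Finset.mem_univ i))

lemma norm_sq_eq (x : V3) : ‖x‖ ^ 2 = ∑ i, x i ^ 2 := by
  rw [EuclideanSpace.norm_eq, Real.sq_sqrt (by positivity)]
  simp [Real.norm_eq_abs, sq_abs]

lemma meas_coord (i : Fin 3) : Measurable fun n : Sph => (n : V3) i := by
  have h : Continuous fun x : V3 => x i := by
    have := (EuclideanSpace.proj (𝕜 := ℝ) (i := i) : V3 →L[ℝ] ℝ).continuous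
    convert this using 1
    rfl
  exact (h.comp continuous_subtype_val).measurable

lemma integrable_bdd {f : Sph → ℝ} (hm : Measurable f) {C : ℝ} (hb : ∀ x, |f x| ≤ C) :
    Integrable f dOmega :=
  Integrable.mono' (integrable_const C) hm.aestronglyMeasurable
    (Filter.Eventually.of_forall fun x => by simpa using hb x)

lemma sph_norm (n : Sph) : ‖(n : V3)‖ = 1 := mem_sphere_zero_iff_norm.mp n.2

lemma meas_linform (u : Fin 3 → ℝ) : Measurable fun n : Sph => ∑ j, u j * (n : V3) j :=
  Finset.measurable_sum _ fun j _ => (meas_coord j).const_mul (u j)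

lemma linform_abs_le (u : Fin 3 → ℝ) (n : Sph) :
    |∑ j, u j * (n : V3) j| ≤ ∑ j, |u j| := by
  calc |∑ j, u j * (n : V3) j| ≤ ∑ j, |u j * (n : V3) j| := Finset.abs_sum_le_sum_abs _ _
    _ ≤ ∑ j, |u j| := by
        refine Finset.sum_le_sum fun j _ => ?_
        rw [abs_mul]
        calc |u j| * |(n:V3) j| ≤ |u j| * 1 :=
              mul_le_mul_of_nonneg_left ((coord_abs_le _ j).trans (sph_norm n).le) (abs_nonneg _)
          _ = |u j| := mul_one _

lemma integrable_quadform (u v : Fin 3 → ℝ) :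
    Integrable (fun n : Sph => (∑ j, u j * (n:V3) j) * (∑ k, v k * (n:V3) k)) dOmega := by
  refine integrable_bdd ((meas_linform u).mul (meas_linform v))
    (C := (∑ j, |u j|) * (∑ k, |v k|)) fun n => ?_
  rw [abs_mul]
  exact mul_le_mul (linform_abs_le u n) (linform_abs_le v n) (abs_nonneg _)
    (Finset.sum_nonneg fun j _ => abs_nonneg _)

lemma integral_quad (u v : Fin 3 → ℝ) :
    ∫ n : Sph, ((∑ j, u j * (n:V3) j) * (∑ k, v k * (n:V3) k)) ∂dOmega
      = (4 * π / 3) * ∑ j, u j * v j := by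
  have hexp : (fun n : Sph => (∑ j, u j * (n:V3) j) * (∑ k, v k * (n:V3) k))
      = fun n : Sph => ∑ j, ∑ k, (u j * v k) * ((n:V3) j * (n:V3) k) := by
    funext n
    rw [Finset.sum_mul_sum]
    exact Finset.sum_congr rfl fun j _ => Finset.sum_congr rfl fun k _ => by ring
  have gin : ∀ j k : Fin 3,
      Integrable (fun n : Sph => (u j * v k) * ((n:V3) j * (n:V3) k)) dOmega := by
    intro j k
    refine (integrable_bdd ((meas_coord j).mul (meas_coord k)) (C := 1) fun n => ?_).const_mul _
    rw [Pi.mul_apply, abs_mul]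
    calc |(n:V3) j| * |(n:V3) k| ≤ 1 * 1 :=
          mul_le_mul ((coord_abs_le _ _).trans (sph_norm n).le)
            ((coord_abs_le _ _).trans (sph_norm n).le) (abs_nonneg _) zero_le_one
      _ = 1 := mul_one _
  rw [hexp, integral_finset_sum _ fun j _ => integrable_finset_sum _ fun k _ => gin j k]
  have h1 : ∀ j : Fin 3, ∫ n : Sph, (∑ k, (u j * v k) * ((n:V3) j * (n:V3) k)) ∂dOmega
      = u j * v j * (4 * π / 3) := by
    intro j
    rw [integral_finset_sum _ fun k _ => gin j k]
    have h2 : ∀ k : Fin 3, ∫ n : Sph, (u j * v k) * ((n:V3) j * (n:V3) k) ∂dOmega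
        = if j = k then u j * v k * (4 * π / 3) else 0 := by
      intro k
      rw [integral_const_mul, sphere_moment j k]
      by_cases hjk : j = k
      · rw [if_pos hjk, if_pos hjk]
      · rw [if_neg hjk, if_neg hjk, mul_zero]
    rw [Finset.sum_congr rfl fun k _ => h2 k, Finset.sum_ite_eq Finset.univ j
      (fun k => u j * v k * (4 * π / 3)), if_pos (Finset.mem_univ j)]
  rw [Finset.sum_congr rfl fun j _ => h1 j, ← Finset.sum_mul]
  ring

lemma bilin_expand (M : Matrix (Fin 3) (Fin 3) ℝ) (x y : V3) :
    bilin M x y = ∑ j, (∑ i, M i j * x i) * y j := by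
  rw [bilin, Finset.sum_comm]
  exact Finset.sum_congr rfl fun j _ => (Finset.sum_mul _ _ _).symm

lemma meas_bilin_left (M : Matrix (Fin 3) (Fin 3) ℝ) (y : V3) :
    Measurable fun m : Sph => bilin M (m : V3) y := by
  simp only [bilin]
  exact Finset.measurable_sum _ fun i _ => Finset.measurable_sum _ fun j _ =>
    ((meas_coord i).const_mul (M i j)).mul_const (y j)

lemma bilin_abs_le (M : Matrix (Fin 3) (Fin 3) ℝ) (x y : V3) (hx : ‖x‖ = 1) (hy : ‖y‖ = 1) :
    |bilin M x y| ≤ ∑ i, ∑ j, |M i j| := by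
  calc |bilin M x y| ≤ ∑ i, |∑ j, M i j * x i * y j| := Finset.abs_sum_le_sum_abs _ _
    _ ≤ ∑ i, ∑ j, |M i j * x i * y j| :=
        Finset.sum_le_sum fun i _ => Finset.abs_sum_le_sum_abs _ _
    _ ≤ ∑ i, ∑ j, |M i j| := by
        refine Finset.sum_le_sum fun i _ => Finset.sum_le_sum fun j _ => ?_
        rw [abs_mul, abs_mul]
        calc |M i j| * |x i| * |y j| ≤ |M i j| * 1 * 1 := by
              refine mul_le_mul (mul_le_mul le_rfl ?_ (abs_nonneg _) (abs_nonneg _)) ?_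
                (abs_nonneg _) (by positivity)
              · exact (coord_abs_le x i).trans hx.le
              · exact (coord_abs_le y j).trans hy.le
          _ = |M i j| := by ring

noncomputable def Tvec (T : Matrix (Fin 3) (Fin 3) ℝ) (y : V3) : V3 :=
  (WithLp.equiv 2 (Fin 3 → ℝ)).symm (fun i => ∑ j, T i j * y j)

lemma Tvec_apply (T : Matrix (Fin 3) (Fin 3) ℝ) (y : V3) (i : Fin 3) :
    Tvec T y i = ∑ j, T i j * y j := rfl

lemma bilin_eq_dot (T : Matrix (Fin 3) (Fin 3) ℝ) (x y : V3) :
    bilin T x y = dot x (Tvec T y) := by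
  rw [bilin, dot]
  refine Finset.sum_congr rfl fun i _ => ?_
  rw [Tvec_apply, Finset.mul_sum]
  exact Finset.sum_congr rfl fun j _ => by ring

lemma meas_bilin_right (M : Matrix (Fin 3) (Fin 3) ℝ) (x : V3) :
    Measurable fun n : Sph => bilin M x (n : V3) := by
  simp only [bilin]
  exact Finset.measurable_sum _ fun i _ => Finset.measurable_sum _ fun j _ =>
    (meas_coord j).const_mul _

lemma meas_dot_left (y : V3) : Measurable fun n : Sph => dot (n : V3) y := by
  simp only [dot]
  exact Finset.measurable_sum _ fun i _ => (meas_coord i).mul_const _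

lemma dot_abs_le (y : V3) (n : Sph) : |dot (n : V3) y| ≤ ∑ i, |y i| := by
  rw [dot]
  calc |∑ i, (n:V3) i * y i| ≤ ∑ i, |(n:V3) i * y i| := Finset.abs_sum_le_sum_abs _ _
    _ ≤ ∑ i, |y i| := by
        refine Finset.sum_le_sum fun i _ => ?_
        rw [abs_mul]
        calc |(n:V3) i| * |y i| ≤ 1 * |y i| :=
              mul_le_mul_of_nonneg_right ((coord_abs_le _ i).trans (sph_norm n).le) (abs_nonneg _)
          _ = |y i| := one_mul _

lemma integrable_bilin_dot (M : Matrix (Fin 3) (Fin 3) ℝ) (x y : V3) (hx : ‖x‖ = 1) :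
    Integrable (fun n : Sph => bilin M x ↑n * dot ↑n y) dOmega := by
  refine integrable_bdd ((meas_bilin_right M x).mul (meas_dot_left y))
    (C := (∑ i, ∑ j, |M i j|) * ∑ i, |y i|) fun n => ?_
  rw [abs_mul]
  exact mul_le_mul (bilin_abs_le M x ↑n hx (sph_norm n)) (dot_abs_le y n) (abs_nonneg _)
    (Finset.sum_nonneg fun i _ => Finset.sum_nonneg fun j _ => abs_nonneg _)

/-- If `(2/3) ∑ᵢⱼ Tᵢⱼ Sᵢⱼ` exceeds the largest singular value `T₁` of `T`,
then the correlation function `E_S(m,n) = m · S n` admits no LHS (non-steering) model. -/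
theorem steering_criterion_via_scalar_product (T S : Matrix (Fin 3) (Fin 3) ℝ)
    (h : (2 / 3) * (∑ i, ∑ j, T i j * S i j) > maxSingularValue T) :
    ¬ HasLHSModel (fun m n => bilin S m n) := by
  rintro ⟨N, p, I, lam, hp0, hp1, hImeas, hIbd, hlam, hE⟩
  have hE' : ∀ m n : Sph, bilin S ↑m ↑n = ∑ l, p l * I l m * dot ↑n (lam l) := hE
  have hBdd : BddAbove {x : ℝ | ∃ m n : V3, ‖m‖ = 1 ∧ ‖n‖ = 1 ∧ x = bilin T m n} := by
    refine ⟨∑ i, ∑ j, |T i j|, fun x hx => ?_⟩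
    obtain ⟨m, n, hm, hn, rfl⟩ := hx
    exact (le_abs_self _).trans (bilin_abs_le T m n hm hn)
  have hmem : ∀ m n : V3, ‖m‖ = 1 → ‖n‖ = 1 → bilin T m n ≤ maxSingularValue T :=
    fun m n hm hn => le_csSup hBdd ⟨m, n, hm, hn, rfl⟩
  have hTvec : ∀ y : V3, ‖y‖ = 1 → ‖Tvec T y‖ ≤ maxSingularValue T := by
    intro y hy
    set a := Tvec T y with ha
    rcases eq_or_ne a 0 with h0 | h0
    · rw [h0, norm_zero]
      have hsn : ‖(EuclideanSpace.single (0 : Fin 3) (1:ℝ) : V3)‖ = 1 := by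
        rw [EuclideanSpace.norm_single, norm_one]
      have h1 := hmem (EuclideanSpace.single 0 1) y hsn hy
      have h2 := hmem (-(EuclideanSpace.single 0 1)) y (by rw [norm_neg, hsn]) hy
      have h3 : bilin T (-(EuclideanSpace.single 0 1)) y
          = - bilin T (EuclideanSpace.single 0 1) y := by
        rw [bilin, bilin, ← Finset.sum_neg_distrib]
        refine Finset.sum_congr rfl fun i _ => ?_
        rw [← Finset.sum_neg_distrib]
        refine Finset.sum_congr rfl fun j _ => ?_
        rw [PiLp.neg_apply]; ring
      rw [h3] at h2
      linarith
    · have hna : ‖a‖ ≠ 0 := norm_ne_zero_iff.2 h0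
      have hm : ‖‖a‖⁻¹ • a‖ = 1 := by
        rw [norm_smul, norm_inv, norm_norm, inv_mul_cancel₀ hna]
      have hdaa : dot a a = ‖a‖ ^ 2 := by
        rw [norm_sq_eq, dot]
        exact Finset.sum_congr rfl fun i _ => (sq (a i)).symm
      have hval : bilin T (‖a‖⁻¹ • a) y = ‖a‖ := by
        rw [bilin_eq_dot, ← ha, dot_smul_left, hdaa, sq]
        field_simp
      have := hmem _ y hm hy
      rw [hval] at this
      exact this
  set A := ∑ i, ∑ j, T i j * S i j with hA
  have hJ1 : ∫ m : Sph, (∫ n : Sph, bilin T ↑m ↑n * bilin S ↑m ↑n ∂dOmega) ∂dOmega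
      = (4*π/3) * ((4*π/3) * A) := by
    have hinner : ∀ m : Sph, ∫ n : Sph, bilin T ↑m ↑n * bilin S ↑m ↑n ∂dOmega
        = (4*π/3) * ∑ j, (∑ i, T i j * (m:V3) i) * (∑ i, S i j * (m:V3) i) := by
      intro m
      rw [show (fun n : Sph => bilin T ↑m ↑n * bilin S ↑m ↑n)
          = fun n : Sph => (∑ j, (∑ i, T i j * (m:V3) i) * (n:V3) j)
              * (∑ k, (∑ i, S i k * (m:V3) i) * (n:V3) k) from
        funext fun n => by rw [bilin_expand, bilin_expand]]
      exact integral_quad _ _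
    rw [show (fun m : Sph => ∫ n : Sph, bilin T ↑m ↑n * bilin S ↑m ↑n ∂dOmega)
        = fun m : Sph => (4*π/3) * ∑ j, (∑ i, T i j * (m:V3) i) * (∑ i, S i j * (m:V3) i)
        from funext hinner, integral_const_mul,
      integral_finset_sum _ (fun j _ => integrable_quadform (fun i => T i j) (fun i => S i j)),
      Finset.sum_congr rfl fun j _ => integral_quad (fun i => T i j) (fun i => S i j),
      ← Finset.mul_sum]
    have hcomm : ∑ j, ∑ i, T i j * S i j = A := by rw [hA]; exact Finset.sum_comm
    rw [hcomm]
  have hJ2 : ∫ m : Sph, (∫ n : Sph, bilin T ↑m ↑n * bilin S ↑m ↑n ∂dOmega) ∂dOmega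
      ≤ (4*π/3) * (2*π*maxSingularValue T) := by
    have hinner2 : ∀ m : Sph, ∫ n : Sph, bilin T ↑m ↑n * bilin S ↑m ↑n ∂dOmega
        = ∑ l, p l * ((4*π/3) * (I l m * bilin T ↑m (lam l))) := by
      intro m
      have hfun : (fun n : Sph => bilin T ↑m ↑n * bilin S ↑m ↑n)
          = fun n : Sph => ∑ l, (p l * I l m) * (bilin T ↑m ↑n * dot ↑n (lam l)) := by
        funext n
        rw [hE' m n, Finset.mul_sum]
        exact Finset.sum_congr rfl fun l _ => by ring
      rw [hfun, integral_finset_sum _ fun l _ =>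
        (integrable_bilin_dot T ↑m (lam l) (sph_norm m)).const_mul _]
      refine Finset.sum_congr rfl fun l _ => ?_
      rw [integral_const_mul]
      have hq : ∫ n : Sph, bilin T ↑m ↑n * dot ↑n (lam l) ∂dOmega
          = (4*π/3) * bilin T ↑m (lam l) := by
        rw [show (fun n : Sph => bilin T ↑m ↑n * dot ↑n (lam l))
            = fun n : Sph => (∑ j, (∑ i, T i j * (m:V3) i) * (n:V3) j)
                * (∑ k, (lam l) k * (n:V3) k) from funext fun n => by
              rw [bilin_expand, dot]
              congr 1
              exact Finset.sum_congr rfl fun k _ => mul_comm _ _]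
        rw [integral_quad, bilin_expand]
      rw [hq]; ring
    rw [show (fun m : Sph => ∫ n : Sph, bilin T ↑m ↑n * bilin S ↑m ↑n ∂dOmega)
        = fun m : Sph => ∑ l, p l * ((4*π/3) * (I l m * bilin T ↑m (lam l)))
        from funext hinner2]
    have hint_l : ∀ l, Integrable (fun m : Sph => I l m * bilin T ↑m (lam l)) dOmega := by
      intro l
      refine integrable_bdd ((hImeas l).mul (meas_bilin_left T (lam l)))
        (C := ∑ i, ∑ j, |T i j|) fun m => ?_
      rw [abs_mul]
      calc |I l m| * |bilin T ↑m (lam l)| ≤ 1 * (∑ i, ∑ j, |T i j|) :=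
            mul_le_mul (hIbd l m) (bilin_abs_le T ↑m (lam l) (sph_norm m) (hlam l))
              (abs_nonneg _) zero_le_one
        _ = ∑ i, ∑ j, |T i j| := one_mul _
    rw [integral_finset_sum _ fun l _ => (((hint_l l).const_mul _).const_mul _),
      Finset.sum_congr rfl fun l _ => by rw [integral_const_mul, integral_const_mul]]
    have hbound : ∀ l, p l * ((4*π/3) * ∫ m : Sph, I l m * bilin T ↑m (lam l) ∂dOmega)
        ≤ p l * ((4*π/3) * (2*π*maxSingularValue T)) := by
      intro l
      refine mul_le_mul_of_nonneg_left (mul_le_mul_of_nonneg_left ?_ (by positivity)) (hp0 l)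
      have hub : ∀ m : Sph, I l m * bilin T ↑m (lam l) ≤ |dot ↑m (Tvec T (lam l))| := by
        intro m
        calc I l m * bilin T ↑m (lam l) ≤ |I l m * bilin T ↑m (lam l)| := le_abs_self _
          _ = |I l m| * |bilin T ↑m (lam l)| := abs_mul _ _
          _ ≤ 1 * |bilin T ↑m (lam l)| :=
              mul_le_mul_of_nonneg_right (hIbd l m) (abs_nonneg _)
          _ = |dot ↑m (Tvec T (lam l))| := by rw [one_mul, bilin_eq_dot]
      have habs_int : Integrable (fun m : Sph => |dot ↑m (Tvec T (lam l))|) dOmega := by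
        refine integrable_bdd (meas_dot_left (Tvec T (lam l))).abs
          (C := ∑ i, |Tvec T (lam l) i|) fun m => ?_
        rw [abs_abs]
        exact dot_abs_le _ m
      have hmono := integral_mono (hint_l l) habs_int hub
      rw [sphere_abs] at hmono
      refine hmono.trans ?_
      have := hTvec (lam l) (hlam l)
      nlinarith [pi_pos]
    calc ∑ l, p l * ((4*π/3) * ∫ m : Sph, I l m * bilin T ↑m (lam l) ∂dOmega)
        ≤ ∑ l, p l * ((4*π/3) * (2*π*maxSingularValue T)) :=
          Finset.sum_le_sum fun l _ => hbound l
      _ = (4*π/3) * (2*π*maxSingularValue T) := by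
          rw [← Finset.sum_mul, hp1, one_mul]
  have hfinal := hJ1 ▸ hJ2
  nlinarith [hfinal, h, mul_pos pi_pos pi_pos]

end
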